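/- Let X be a symmetric n×n matrix of variables over a field of characteristic 0, n ≥ 4, and let i₁ < i₂ < i₃ < i₄ be four indices. Then the hafnian operator ∂²/(∂x_{i₁i₂}∂x_{i₃i₄}) + ∂²/(∂x_{i₁i₃}∂x_{i₂i₄}) + ∂²/(∂x_{i₁i₄}∂x_{i₂i₃}) annihilates det(X). -/

import Mathlib

open MvPolynomial Finset

section Aux

variable {σ R : Type*} [CommRing R]

omit [CommRing R] in
lemma pderiv_finset_prod' {ι : Type*} [DecidableEq ι] [CommRing R] (v : σ) (s : Finset ι)
    (f : ι → MvPolynomial σ R) :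
    pderiv v (∏ i ∈ s, f i) = ∑ i ∈ s, pderiv v (f i) * ∏ j ∈ s.erase i, f j := by
  induction s using Finset.induction_on with
  | empty => simp
  | insert _ _ h ih =>
    rename_i a s
    rw [Finset.prod_insert h, pderiv_mul, ih, Finset.sum_insert h, Finset.erase_insert h]
    rw [Finset.mul_sum]
    congr 1
    refine Finset.sum_congr rfl fun i hi => ?_
    rw [Finset.erase_insert_of_ne (by rintro rfl; exact h hi)]
    rw [Finset.prod_insert (fun ha => h (Finset.mem_of_mem_erase ha))]
    ring

lemma pderiv_det' {n : ℕ} (v : σ) (M : Matrix (Fin n) (Fin n) (MvPolynomial σ R)) :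
    pderiv v M.det = ∑ r, (M.updateRow r fun j => pderiv v (M r j)).det := by
  have hC : ∀ τ : Equiv.Perm (Fin n),
      (Equiv.Perm.sign τ : MvPolynomial σ R) = C ((Equiv.Perm.sign τ : ℤ) : R) := by
    intro τ; simp
  rw [Matrix.det_apply', map_sum]
  have step1 : ∀ τ : Equiv.Perm (Fin n),
      pderiv v ((Equiv.Perm.sign τ : MvPolynomial σ R) * ∏ i, M (τ i) i)
      = ∑ r : Fin n, (Equiv.Perm.sign τ : MvPolynomial σ R) *
          (pderiv v (M r (τ⁻¹ r)) * ∏ j ∈ Finset.univ.erase (τ⁻¹ r), M (τ j) j) := by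
    intro τ
    classical
    rw [hC, pderiv_C_mul, pderiv_finset_prod', Finset.mul_sum]
    refine Fintype.sum_equiv τ _ _ fun i => ?_
    rw [Equiv.Perm.inv_def, Equiv.symm_apply_apply]
  rw [Finset.sum_congr rfl (fun τ _ => step1 τ), Finset.sum_comm]
  refine Finset.sum_congr rfl fun r _ => ?_
  rw [Matrix.det_apply']
  refine Finset.sum_congr rfl fun τ _ => ?_
  congr 1
  have h1 : (M.updateRow r fun j => pderiv v (M r j)) (τ (τ⁻¹ r)) (τ⁻¹ r)
      = pderiv v (M r (τ⁻¹ r)) := by simp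
  rw [← Finset.mul_prod_erase Finset.univ _ (Finset.mem_univ (τ⁻¹ r)), h1]
  congr 1
  refine Finset.prod_congr rfl fun j hj => ?_
  have : τ j ≠ r := by
    intro h
    exact (Finset.mem_erase.mp hj).1 (by simp [← h])
  rw [Matrix.updateRow_ne this]

lemma updateRow_comm' {n m : ℕ} (M : Matrix (Fin n) (Fin m) R) {a b : Fin n} (hab : a ≠ b)
    (u v : Fin m → R) :
    (M.updateRow a u).updateRow b v = (M.updateRow b v).updateRow a u := by
  ext i j
  rcases eq_or_ne i a with rfl | hia
  · rw [Matrix.updateRow_ne hab, Matrix.updateRow_self, Matrix.updateRow_self]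
  · rcases eq_or_ne i b with rfl | hib
    · rw [Matrix.updateRow_self, Matrix.updateRow_ne hab.symm, Matrix.updateRow_self]
    · rw [Matrix.updateRow_ne hib, Matrix.updateRow_ne hia, Matrix.updateRow_ne hia,
        Matrix.updateRow_ne hib]

lemma det_updateRow_antisymm {n : ℕ} (M : Matrix (Fin n) (Fin n) R) {a b : Fin n} (hab : a ≠ b)
    (u v : Fin n → R) :
    ((M.updateRow a u).updateRow b v).det = -((M.updateRow a v).updateRow b u).det := by
  have h0 : ∀ w : Fin n → R, ((M.updateRow a w).updateRow b w).det = 0 := by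
    intro w
    refine Matrix.det_zero_of_row_eq hab ?_
    rw [Matrix.updateRow_ne hab, Matrix.updateRow_self, Matrix.updateRow_self]
  have key := h0 (u + v)
  rw [Matrix.det_updateRow_add, updateRow_comm' _ hab, updateRow_comm' _ hab (u+v) v,
    Matrix.det_updateRow_add, Matrix.det_updateRow_add,
    updateRow_comm' _ hab.symm, updateRow_comm' _ hab.symm,
    updateRow_comm' _ hab.symm, updateRow_comm' _ hab.symm,
    h0 u, h0 v] at key
  linear_combination key

end Aux

/-- The standard basis row vector. -/
noncomputable def eRow (R : Type*) [CommRing R] {n : ℕ} (c : Fin n) : Fin n → MvPolynomial (Sym2 (Fin n)) R :=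
  fun j => if j = c then 1 else 0

lemma step_lemma {R : Type*} [CommRing R] {n : ℕ} (p q : Fin n) (hpq : p ≠ q)
    (N : Matrix (Fin n) (Fin n) (MvPolynomial (Sym2 (Fin n)) R))
    (hp : ∀ j, N p j = X s(p, j)) (hq : ∀ j, N q j = X s(q, j))
    (h0 : ∀ r, r ≠ p → r ≠ q → ∀ j, pderiv s(p, q) (N r j) = 0) :
    pderiv s(p, q) N.det =
      (N.updateRow p (eRow R q)).det + (N.updateRow q (eRow R p)).det := by
  rw [pderiv_det']
  rw [← Finset.sum_subset (Finset.subset_univ ({p, q} : Finset (Fin n)))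
    (fun r _ hr => ?_)]
  · have hrowp : (fun j => pderiv s(p, q) (N p j)) = eRow R q := by
      funext j
      rw [hp]
      rcases eq_or_ne j q with rfl | hj
      · simp [eRow]
      · have : s(p, j) ≠ s(p, q) := by
          rw [Ne, Sym2.eq_iff]
          push_neg
          exact ⟨fun _ => hj, fun h => absurd h hpq⟩
        rw [pderiv_X_of_ne this]
        simp [eRow, hj]
    have hrowq : (fun j => pderiv s(p, q) (N q j)) = eRow R p := by
      funext j
      rw [hq]
      rcases eq_or_ne j p with h | hj
      · rw [h, show s(q, p) = s(p, q) from Sym2.eq_swap, pderiv_X_self]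
        simp [eRow, h]
      · have : s(q, j) ≠ s(p, q) := by
          rw [Ne, Sym2.eq_iff]
          push_neg
          exact ⟨fun h => absurd h.symm hpq, fun _ => hj⟩
        rw [pderiv_X_of_ne this]
        simp [eRow, hj]
    rw [Finset.sum_pair hpq, hrowp, hrowq]
  · -- rows outside {p, q} vanish
    have hrp : r ≠ p := fun h => hr (by simp [h])
    have hrq : r ≠ q := fun h => hr (by simp [h])
    refine Matrix.det_eq_zero_of_row_eq_zero r fun j => ?_
    rw [Matrix.updateRow_self]
    exact h0 r hrp hrq j

lemma pderiv_X_sym2 {R : Type*} [CommRing R] {n : ℕ} {r p q : Fin n} (j : Fin n)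
    (h1 : r ≠ p) (h2 : r ≠ q) :
    pderiv s(p, q) (X s(r, j) : MvPolynomial (Sym2 (Fin n)) R) = 0 := by
  apply pderiv_X_of_ne
  rw [Ne, Sym2.eq_iff]
  rintro (⟨rfl, -⟩ | ⟨rfl, -⟩)
  · exact h1 rfl
  · exact h2 rfl

lemma pderiv_eRow {R : Type*} [CommRing R] {n : ℕ} (c j : Fin n) (v : Sym2 (Fin n)) :
    pderiv v (eRow R c j) = 0 := by
  unfold eRow
  split <;> simp

/-- For the determinant of the generic symmetric `n × n` matrix (`n ≥ 4`) and indices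
`i₁ < i₂ < i₃ < i₄`, the `4×4` hafnian operator
`∂²/(∂x_{i₁i₂}∂x_{i₃i₄}) + ∂²/(∂x_{i₁i₃}∂x_{i₂i₄}) + ∂²/(∂x_{i₁i₄}∂x_{i₂i₃})`
annihilates `det X`. -/
theorem hafnian_annihilates_det {K : Type*} [Field K] [CharZero K]
    (n : ℕ) (hn : 4 ≤ n) (i₁ i₂ i₃ i₄ : Fin n)
    (h12 : i₁ < i₂) (h23 : i₂ < i₃) (h34 : i₃ < i₄) :
    pderiv s(i₁, i₂) (pderiv s(i₃, i₄)
        ((Matrix.of fun a b : Fin n =>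
          (X s(a, b) : MvPolynomial (Sym2 (Fin n)) K)).det))
      + pderiv s(i₁, i₃) (pderiv s(i₂, i₄)
        ((Matrix.of fun a b : Fin n =>
          (X s(a, b) : MvPolynomial (Sym2 (Fin n)) K)).det))
      + pderiv s(i₁, i₄) (pderiv s(i₂, i₃)
        ((Matrix.of fun a b : Fin n =>
          (X s(a, b) : MvPolynomial (Sym2 (Fin n)) K)).det)) = 0 := by
  set M : Matrix (Fin n) (Fin n) (MvPolynomial (Sym2 (Fin n)) K) :=
    Matrix.of fun a b : Fin n => (X s(a, b) : MvPolynomial (Sym2 (Fin n)) K) with hM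
  have n12 : i₁ ≠ i₂ := h12.ne
  have n13 : i₁ ≠ i₃ := (h12.trans h23).ne
  have n14 : i₁ ≠ i₄ := ((h12.trans h23).trans h34).ne
  have n23 : i₂ ≠ i₃ := h23.ne
  have n24 : i₂ ≠ i₄ := (h23.trans h34).ne
  have n34 : i₃ ≠ i₄ := h34.ne
  -- first-step derivative of det M
  have first : ∀ p q : Fin n, p ≠ q →
      pderiv s(p, q) M.det =
        (M.updateRow p (eRow K q)).det + (M.updateRow q (eRow K p)).det := by
    intro p q hpq
    exact step_lemma p q hpq M (fun j => rfl) (fun j => rfl)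
      (fun r hr1 hr2 j => pderiv_X_sym2 j hr1 hr2)
  -- second-step derivative of det of updated matrix
  have second : ∀ a c p q : Fin n, p ≠ q → p ≠ a → q ≠ a →
      pderiv s(p, q) (M.updateRow a (eRow K c)).det =
        ((M.updateRow a (eRow K c)).updateRow p (eRow K q)).det
          + ((M.updateRow a (eRow K c)).updateRow q (eRow K p)).det := by
    intro a c p q hpq hpa hqa
    refine step_lemma p q hpq _ (fun j => ?_) (fun j => ?_) (fun r hr1 hr2 j => ?_)
    · rw [Matrix.updateRow_ne hpa]; rfl
    · rw [Matrix.updateRow_ne hqa]; rfl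
    · rcases eq_or_ne r a with rfl | hra
      · rw [Matrix.updateRow_self]; exact pderiv_eRow c j _
      · rw [Matrix.updateRow_ne hra]; exact pderiv_X_sym2 j hr1 hr2
  rw [first i₃ i₄ n34, first i₂ i₄ n24, first i₂ i₃ n23, map_add, map_add, map_add,
    second i₃ i₄ i₁ i₂ n12 n13 n23,
    second i₄ i₃ i₁ i₂ n12 n14 n24,
    second i₂ i₄ i₁ i₃ n13 n12 n23.symm,
    second i₄ i₂ i₁ i₃ n13 n14 n34,
    second i₂ i₃ i₁ i₄ n14 n12 n24.symm,
    second i₃ i₂ i₁ i₄ n14 n13 n34.symm]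
  have P1 := det_updateRow_antisymm M n13.symm (eRow K i₄) (eRow K i₂)
  have P2 := det_updateRow_antisymm M n23.symm (eRow K i₄) (eRow K i₁)
  have P3 := det_updateRow_antisymm M n14.symm (eRow K i₃) (eRow K i₂)
  have P4 := det_updateRow_antisymm M n24.symm (eRow K i₃) (eRow K i₁)
  have P5 := det_updateRow_antisymm M n12.symm (eRow K i₄) (eRow K i₃)
  have P6 := det_updateRow_antisymm M n34.symm (eRow K i₂) (eRow K i₁)
  have Q2 := congrArg Matrix.det (updateRow_comm' M n23 (eRow K i₄) (eRow K i₁))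
  have Q4 := congrArg Matrix.det (updateRow_comm' M n24 (eRow K i₃) (eRow K i₁))
  have Q6 := congrArg Matrix.det (updateRow_comm' M n34 (eRow K i₂) (eRow K i₁))
  linear_combination P1 + P2 + P3 + P4 + P5 + P6 + Q2 + Q4 + Q6
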